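/- arXiv:2503.16178 — 2 statements merged into one kernel-verified Lean document; each statement's English description precedes it below -/
import Mathlib

section
/- The reduced function h_C(ρ) = √(2(1 − Tr ρ²)) is subadditive on product states: h_C(ρ^A ⊗ ρ^B) ≤ h_C(ρ^A) + h_C(ρ^B) for any density operators ρ^A, ρ^B on finite-dimensional Hilbert spaces. -/
open scoped BigOperators
open Matrix
open scoped ComplexOrder

namespace KPE

noncomputable section

variable {ι κ : Type} [Fintype ι] [DecidableEq ι] [Fintype κ] [DecidableEq κ]

/-- A pure state of the multipartite system with parties `ι` and local dimensions `d`. -/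
def IsState (d : ι → ℕ) (ψ : (∀ i, Fin (d i)) → ℂ) : Prop :=
  ∑ x, Complex.normSq (ψ x) = 1

/-- Merge a configuration on `X` with one on its complement. -/
def glue (d : ι → ℕ) (X : Finset ι) (a : ∀ i : {i // i ∈ X}, Fin (d i))
    (c : ∀ i : {i // i ∉ X}, Fin (d i)) : ∀ i, Fin (d i) :=
  fun i => if h : i ∈ X then a ⟨i, h⟩ else c ⟨i, h⟩

/-- Reduced density matrix of the pure state `ψ` on the subset `X` of parties. -/
def reduced (d : ι → ℕ) (ψ : (∀ i, Fin (d i)) → ℂ) (X : Finset ι) :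
    Matrix (∀ i : {i // i ∈ X}, Fin (d i)) (∀ i : {i // i ∈ X}, Fin (d i)) ℂ :=
  fun a b => ∑ c : ∀ i : {i // i ∉ X}, Fin (d i),
    ψ (glue d X a c) * (starRingEnd ℂ) (ψ (glue d X b c))

/-- The block (fiber) of the partition `P` labelled by `b`. -/
def fiber (P : ι → ι) (b : ι) : Finset ι := Finset.univ.filter fun i => P i = b

/-- A partition is `k`-fine if every block has at most `k` parties. -/
def Fineness (P : ι → ι) (k : ℕ) : Prop := ∀ b, (fiber P b).card ≤ k

/-- `ψ` factors as a tensor product along the blocks of `P`. -/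
def FactorsAlong (d : ι → ℕ) (ψ : (∀ i, Fin (d i)) → ℂ) (P : ι → ι) : Prop :=
  ∃ φ : ∀ b : ι, (∀ i : {i // i ∈ fiber P b}, Fin (d i)) → ℂ,
    ∀ x, ψ x = ∏ b : ι, φ b fun i => x i.1

/-- `k`-producible pure states. -/
def Producible (d : ι → ℕ) (k : ℕ) (ψ : (∀ i, Fin (d i)) → ℂ) : Prop :=
  ∃ P : ι → ι, Fineness P k ∧ FactorsAlong d ψ P

/-- A pure state is genuinely entangled if it is not a product across any bipartition. -/
def GenuinelyEntangled (d : ι → ℕ) (ψ : (∀ i, Fin (d i)) → ℂ) : Prop :=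
  ∀ X : Finset ι, X ≠ ∅ → X ≠ Finset.univ →
    ¬ ∃ (φ : (∀ i : {i // i ∈ X}, Fin (d i)) → ℂ)
        (χ : (∀ i : {i // i ∉ X}, Fin (d i)) → ℂ),
      ∀ x, ψ x = φ (fun i => x i.1) * χ (fun i => x i.1)

/-- The concurrence-type reduced function `h_C(ρ) = √(2(1 − Tr ρ²))`. -/
def hC {α : Type} [Fintype α] (ρ : Matrix α α ℂ) : ℝ :=
  Real.sqrt (2 * (1 - ((ρ * ρ).trace).re))

/-- Von Neumann entropy in bits, via the eigenvalues of a Hermitian matrix. -/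
def vNEntropy {α : Type} [Fintype α] [DecidableEq α] (ρ : Matrix α α ℂ) : ℝ :=
  if h : ρ.IsHermitian then (∑ i, Real.negMulLog (h.eigenvalues i)) / Real.log 2 else 0

/-- A density matrix is pure if it is a rank-one projection `|v⟩⟨v|`. -/
def IsPureMat {α : Type} [Fintype α] (ρ : Matrix α α ℂ) : Prop :=
  ∃ v : α → ℂ, ρ = Matrix.vecMulVec v (star v)

/-- Half the sum of the reduced function over the (nonempty) blocks of the partition `P`. -/
def blockSum (d : ι → ℕ) (h : ∀ (α : Type) [Fintype α] [DecidableEq α], Matrix α α ℂ → ℝ)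
    (ψ : (∀ i, Fin (d i)) → ℂ) (P : ι → ι) : ℝ :=
  (1 / 2) * ∑ b ∈ Finset.univ.filter (fun b => (fiber P b).Nonempty),
      h _ (reduced d ψ (fiber P b))

/-- The minimal-sum `k`-partite entanglement measure `E'_{(k)}`. -/
def Emin (d : ι → ℕ) (h : ∀ (α : Type) [Fintype α] [DecidableEq α], Matrix α α ℂ → ℝ)
    (k : ℕ) (ψ : (∀ i, Fin (d i)) → ℂ) : ℝ :=
  sInf { x | ∃ P : ι → ι, Fineness P (k - 1) ∧ x = blockSum d h ψ P }

/-- The averaged measure `C_{(k)}` (average instead of sum over blocks). -/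
def Cavg (d : ι → ℕ) (h : ∀ (α : Type) [Fintype α] [DecidableEq α], Matrix α α ℂ → ℝ)
    (k : ℕ) (ψ : (∀ i, Fin (d i)) → ℂ) : ℝ :=
  sInf { x | ∃ P : ι → ι, Fineness P (k - 1) ∧
    x = (∑ b ∈ Finset.univ.filter (fun b => (fiber P b).Nonempty),
          h _ (reduced d ψ (fiber P b))) /
        ((Finset.univ.filter (fun b => (fiber P b).Nonempty)).card : ℝ) }

/-- The density matrix `|ψ⟩⟨ψ|` of a pure state. -/
def pureDensity (d : ι → ℕ) (ψ : (∀ i, Fin (d i)) → ℂ) :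
    Matrix (∀ i, Fin (d i)) (∀ i, Fin (d i)) ℂ :=
  fun a b => ψ a * (starRingEnd ℂ) (ψ b)

/-- The set of `k`-producible mixed states: convex combinations of `k`-producible
pure-state density matrices. -/
def ProducibleMixed (d : ι → ℕ) (k : ℕ) :
    Set (Matrix (∀ i, Fin (d i)) (∀ i, Fin (d i)) ℂ) :=
  convexHull ℝ { ρ | ∃ ψ, IsState d ψ ∧ Producible d k ψ ∧ ρ = pureDensity d ψ }

/-- Tensor product of pure states on disjoint sets of parties. -/
def tens (d : ι → ℕ) (e : κ → ℕ) (ψ : (∀ i, Fin (d i)) → ℂ) (φ : (∀ j, Fin (e j)) → ℂ) :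
    (∀ i : ι ⊕ κ, Fin (Sum.elim d e i)) → ℂ :=
  fun x => ψ (fun i => x (Sum.inl i)) * φ (fun j => x (Sum.inr j))

/-- Convex-roof extension of a pure-state functional to mixed states. -/
def roof (d : ι → ℕ) (Ep : ((∀ i, Fin (d i)) → ℂ) → ℝ)
    (ρ : Matrix (∀ i, Fin (d i)) (∀ i, Fin (d i)) ℂ) : ℝ :=
  sInf { x | ∃ (N : ℕ) (p : Fin N → ℝ) (ψs : Fin N → ((∀ i, Fin (d i)) → ℂ)),
    (∀ i, 0 ≤ p i) ∧ (∑ i, p i = 1) ∧ (∀ i, IsState d (ψs i)) ∧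
    ρ = ∑ i, p i • pureDensity d (ψs i) ∧ x = ∑ i, p i * Ep (ψs i) }

/-- Generalized `n`-qudit GHZ state. -/
def ghz (n dd : ℕ) : (∀ _ : Fin n, Fin dd) → ℂ :=
  fun x => if ∃ j, ∀ i, x i = j then ((Real.sqrt dd)⁻¹ : ℝ) else 0

/-- The three-qubit W state. -/
def w3 : (∀ _ : Fin 3, Fin 2) → ℂ :=
  fun x => if (∑ i, ((x i : ℕ))) = 1 then ((Real.sqrt 3)⁻¹ : ℝ) else 0

/-- The two-qubit maximally entangled state `|ψ⁺⟩`. -/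
def bell : (∀ _ : Fin 2, Fin 2) → ℂ :=
  fun x => if x 0 = x 1 then ((Real.sqrt 2)⁻¹ : ℝ) else 0

end

end KPE

lemma aux_trace_sq {α : Type} [Fintype α] (ρ : Matrix α α ℂ)
    (hρ : ρ.PosSemidef) (hρ1 : ρ.trace = 1) :
    ∃ x : ℝ, 0 ≤ x ∧ x ≤ 1 ∧ (ρ * ρ).trace = (x : ℂ) := by
  classical
  have hH := hρ.isHermitian
  set U : Matrix α α ℂ := (Matrix.IsHermitian.eigenvectorUnitary hH : Matrix α α ℂ) with hUdef
  have hU' : star U * U = 1 := Matrix.mem_unitaryGroup_iff'.mp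
    (Matrix.IsHermitian.eigenvectorUnitary hH).2
  have hspec := hH.spectral_theorem
  set D : Matrix α α ℂ := Matrix.diagonal (RCLike.ofReal ∘ hH.eigenvalues) with hDdef
  have htraceD : ∀ M : Matrix α α ℂ, (U * M * star U).trace = M.trace := by
    intro M
    rw [Matrix.trace_mul_cycle, hU', Matrix.one_mul]
  have hsq : ρ * ρ = U * (D * D) * star U := by
    rw [hspec, Unitary.conjStarAlgAut_apply]
    simp only [Matrix.mul_assoc]
    rw [← Matrix.mul_assoc (star U) U, hU', Matrix.one_mul]
  have hDD : (D * D).trace = ∑ i, ((hH.eigenvalues i : ℝ) ^ 2 : ℂ) := by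
    rw [hDdef, Matrix.diagonal_mul_diagonal, Matrix.trace_diagonal]
    simp [sq]
  have htr2 : (ρ * ρ).trace = ((∑ i, hH.eigenvalues i ^ 2 : ℝ) : ℂ) := by
    rw [hsq, htraceD, hDD]
    push_cast
    ring
  have htr1 : (∑ i, hH.eigenvalues i : ℝ) = 1 := by
    have : ρ.trace = ((∑ i, hH.eigenvalues i : ℝ) : ℂ) := by
      have h0 : ρ.trace = (U * D * star U).trace := congrArg Matrix.trace hspec
      rw [h0, htraceD, hDdef, Matrix.trace_diagonal]
      push_cast
      rfl
    rw [hρ1] at this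
    exact_mod_cast this.symm
  have hnn : ∀ i ∈ Finset.univ, (0 : ℝ) ≤ hH.eigenvalues i := fun i _ =>
    hρ.eigenvalues_nonneg i
  refine ⟨∑ i, hH.eigenvalues i ^ 2, Finset.sum_nonneg fun i _ => sq_nonneg _, ?_, htr2⟩
  calc ∑ i, hH.eigenvalues i ^ 2 ≤ (∑ i, hH.eigenvalues i) ^ 2 :=
        Finset.sum_sq_le_sq_sum_of_nonneg hnn
    _ = 1 := by rw [htr1]; norm_num

lemma aux_sqrt_subadd (x y : ℝ) (hx0 : 0 ≤ x) (hx1 : x ≤ 1) (hy0 : 0 ≤ y) (hy1 : y ≤ 1) :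
    Real.sqrt (2 * (1 - x * y)) ≤ Real.sqrt (2 * (1 - x)) + Real.sqrt (2 * (1 - y)) := by
  have h1 : 2 * (1 - x * y) ≤ 2 * (1 - x) + 2 * (1 - y) := by nlinarith
  have hx' : (0:ℝ) ≤ 2 * (1 - x) := by linarith
  have hy' : (0:ℝ) ≤ 2 * (1 - y) := by linarith
  have ha := Real.sq_sqrt hx'
  have hb := Real.sq_sqrt hy'
  have hsa := Real.sqrt_nonneg (2 * (1 - x))
  have hsb := Real.sqrt_nonneg (2 * (1 - y))
  calc Real.sqrt (2 * (1 - x * y)) ≤ Real.sqrt (2 * (1 - x) + 2 * (1 - y)) :=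
        Real.sqrt_le_sqrt h1
    _ ≤ Real.sqrt (2 * (1 - x)) + Real.sqrt (2 * (1 - y)) := by
        rw [← Real.sqrt_sq (by positivity :
          (0:ℝ) ≤ Real.sqrt (2 * (1 - x)) + Real.sqrt (2 * (1 - y)))]
        apply Real.sqrt_le_sqrt
        nlinarith

open Kronecker in
/-- `h_C` is subadditive on product states:
`h_C(ρ^A ⊗ ρ^B) ≤ h_C(ρ^A) + h_C(ρ^B)`. -/
theorem hC_subadditive_on_products {α β : Type} [Fintype α] [Fintype β]
    (ρ : Matrix α α ℂ) (σ : Matrix β β ℂ)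
    (hρ : ρ.PosSemidef) (hρ1 : ρ.trace = 1) (hσ : σ.PosSemidef) (hσ1 : σ.trace = 1) :
    KPE.hC (ρ ⊗ₖ σ) ≤ KPE.hC ρ + KPE.hC σ := by
  obtain ⟨x, hx0, hx1, hx⟩ := aux_trace_sq ρ hρ hρ1
  obtain ⟨y, hy0, hy1, hy⟩ := aux_trace_sq σ hσ hσ1
  have htr : ((ρ ⊗ₖ σ) * (ρ ⊗ₖ σ)).trace = ((x * y : ℝ) : ℂ) := by
    rw [← Matrix.mul_kronecker_mul, Matrix.trace_kronecker, hx, hy]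
    push_cast
    ring
  unfold KPE.hC
  rw [htr, hx, hy]
  simp only [Complex.ofReal_re]
  exact aux_sqrt_subadd x y hx0 hx1 hy0 hy1
end

section
/- The averaged concurrence-based measure C_{(k)}(|ψ⟩) = min over (k−1)-fineness m-partitions of (1/m) Σ_t h_C(ρ^{X_t}) fails additivity: there exists a pure state |ψ⟩^{AB}⊗|ψ⟩^{C}⊗|ψ⟩^{DEF} (with |ψ⟩^{DEF} genuinely entangled, |ψ⟩^{AB} possibly entangled) such that C_{(3)}(|ψ⟩^{AB}⊗|ψ⟩^{C}) + C_{(3)}(|ψ⟩^{DEF}) ≠ C_{(3)}(|ψ⟩^{AB}⊗|ψ⟩^{C}⊗|ψ⟩^{DEF}). -/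
open scoped BigOperators
open Matrix
open scoped ComplexOrder

/-- The family version of `h_C`, usable as a reduced function on every subsystem. -/
noncomputable def hCF : ∀ (α : Type) [Fintype α] [DecidableEq α], Matrix α α ℂ → ℝ :=
  fun _ _ _ ρ => KPE.hC ρ

/-- The family version of the von Neumann entropy (in bits). -/
noncomputable def vNF : ∀ (α : Type) [Fintype α] [DecidableEq α], Matrix α α ℂ → ℝ :=
  fun _ _ _ ρ => KPE.vNEntropy ρ
namespace KPEAux
open KPE Complex

set_option linter.unusedSectionVars false

noncomputable section

variable {ι : Type} [Fintype ι] [DecidableEq ι] (d : ι → ℕ) (X : Finset ι)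

/-- Restriction to `X`. -/
def rA (z : ∀ i, Fin (d i)) : ∀ i : {i // i ∈ X}, Fin (d i.1) := fun i => z i.1
/-- Restriction to the complement of `X`. -/
def rC (z : ∀ i, Fin (d i)) : ∀ i : {i // i ∉ X}, Fin (d i.1) := fun i => z i.1

lemma glue_rr (z : ∀ i, Fin (d i)) : glue d X (rA d X z) (rC d X z) = z := by
  funext i
  unfold glue rA rC
  split <;> rfl

lemma rA_glue (a : ∀ i : {i // i ∈ X}, Fin (d i.1)) (c : ∀ i : {i // i ∉ X}, Fin (d i.1)) :
    rA d X (glue d X a c) = a := by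
  funext i
  exact dif_pos i.2

lemma rC_glue (a : ∀ i : {i // i ∈ X}, Fin (d i.1)) (c : ∀ i : {i // i ∉ X}, Fin (d i.1)) :
    rC d X (glue d X a c) = c := by
  funext i
  exact dif_neg i.2

lemma glue_eq_iff (a : ∀ i : {i // i ∈ X}, Fin (d i.1)) (c : ∀ i : {i // i ∉ X}, Fin (d i.1))
    (z : ∀ i, Fin (d i)) : glue d X a c = z ↔ a = rA d X z ∧ c = rC d X z := by
  constructor
  · rintro rfl
    exact ⟨(rA_glue d X a c).symm, (rC_glue d X a c).symm⟩
  · rintro ⟨rfl, rfl⟩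
    exact glue_rr d X z

lemma sum_sum_ite {A : Type} [Fintype A] [DecidableEq A] (v : ℂ) (pa : A) :
    (∑ a : A, ∑ b : A, (if a = pa ∧ b = pa then v else 0)) = v := by
  simp [ite_and, Finset.sum_ite_eq']

/-- one-point supported state: the reduced state is pure. -/
lemma trace_one_point (ψ : (∀ i, Fin (d i)) → ℂ) (p : ∀ i, Fin (d i))
    (hp : Complex.normSq (ψ p) = 1) (h0 : ∀ z, z ≠ p → ψ z = 0) :
    ((reduced d ψ X * reduced d ψ X).trace) = 1 := by
  set pa := rA d X p with hpa
  set pc := rC d X p with hpc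
  have hρ : ∀ a b, reduced d ψ X a b =
      if a = pa ∧ b = pa then (1 : ℂ) else 0 := by
    intro a b
    have key : ∀ c, ψ (glue d X a c) * (starRingEnd ℂ) (ψ (glue d X b c)) =
        if (a = pa ∧ b = pa) ∧ c = pc then (1 : ℂ) else 0 := by
      intro c
      by_cases h1 : glue d X a c = p
      · obtain ⟨ha, hc⟩ := (glue_eq_iff d X a c p).mp h1
        by_cases h2 : glue d X b c = p
        · obtain ⟨hb, -⟩ := (glue_eq_iff d X b c p).mp h2
          rw [h1, h2, if_pos ⟨⟨ha, hb⟩, hc⟩, Complex.mul_conj, hp]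
          norm_num
        · rw [h0 _ h2, map_zero, mul_zero, if_neg]
          rintro ⟨⟨-, rfl⟩, rfl⟩
          exact h2 (glue_rr d X p)
      · rw [h0 _ h1, if_neg, zero_mul]
        rintro ⟨⟨rfl, -⟩, rfl⟩
        exact h1 (glue_rr d X p)
    unfold reduced
    rw [Finset.sum_congr rfl fun c _ => key c]
    by_cases hab : a = pa ∧ b = pa
    · simp [hab, Finset.sum_ite_eq']
    · simp [hab]
  have : (reduced d ψ X * reduced d ψ X).trace =
      ∑ a, ∑ b, reduced d ψ X a b * reduced d ψ X b a := by
    simp [Matrix.trace, Matrix.mul_apply, Matrix.diag]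
  rw [this]
  have : ∀ a b, reduced d ψ X a b * reduced d ψ X b a =
      if a = pa ∧ b = pa then (1 : ℂ) else 0 := by
    intro a b
    rw [hρ a b, hρ b a]
    by_cases h1 : a = pa <;> by_cases h2 : b = pa <;> simp [h1, h2]
  rw [Finset.sum_congr rfl fun a _ => Finset.sum_congr rfl fun b _ => this a b]
  exact sum_sum_ite (1 : ℂ) pa

lemma sum_ite_pt {C : Type} [Fintype C] [DecidableEq C] (P : Prop) [Decidable P]
    (c0 : C) (v : ℂ) :
    (∑ c : C, if P ∧ c = c0 then v else 0) = if P then v else 0 := by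
  simp [ite_and, Finset.sum_ite_eq']

/-- two-point supported state, the two points differing both inside and outside `X`. -/
lemma trace_two_point_split (ψ : (∀ i, Fin (d i)) → ℂ) (p q : ∀ i, Fin (d i)) (α : ℂ)
    (hp : ψ p = α) (hq : ψ q = α) (hα : Complex.normSq α = 1/2)
    (h0 : ∀ z, z ≠ p → z ≠ q → ψ z = 0)
    (hX : ∃ i, i ∈ X ∧ p i ≠ q i) (hXc : ∃ i, i ∉ X ∧ p i ≠ q i) :
    ((reduced d ψ X * reduced d ψ X).trace) = ((1/2 : ℝ) : ℂ) := by
  obtain ⟨i1, hi1, hne1⟩ := hX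
  obtain ⟨i2, hi2, hne2⟩ := hXc
  have hpaqa : rA d X p ≠ rA d X q := fun h => hne1 (congrFun h ⟨i1, hi1⟩)
  have hpcqc : rC d X p ≠ rC d X q := fun h => hne2 (congrFun h ⟨i2, hi2⟩)
  have hαα : α * (starRingEnd ℂ) α = ((1/2 : ℝ) : ℂ) := by
    rw [Complex.mul_conj, hα]
  have key : ∀ a b c, ψ (glue d X a c) * (starRingEnd ℂ) (ψ (glue d X b c)) =
      (if (a = rA d X p ∧ b = rA d X p) ∧ c = rC d X p then ((1/2 : ℝ) : ℂ) else 0) +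
      (if (a = rA d X q ∧ b = rA d X q) ∧ c = rC d X q then ((1/2 : ℝ) : ℂ) else 0) := by
    intro a b c
    by_cases h1 : glue d X a c = p
    · obtain ⟨ha, hc⟩ := (glue_eq_iff d X a c p).mp h1
      have e2 : ¬((a = rA d X q ∧ b = rA d X q) ∧ c = rC d X q) :=
        fun h => hpcqc (hc.symm.trans h.2)
      by_cases h2 : glue d X b c = p
      · obtain ⟨hb, -⟩ := (glue_eq_iff d X b c p).mp h2
        simp only [if_neg e2, if_pos (show (a = rA d X p ∧ b = rA d X p) ∧ c = rC d X p
          from ⟨⟨ha, hb⟩, hc⟩), add_zero, h1, h2, hp, hαα]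
      · have h3 : glue d X b c ≠ q := fun h =>
          hpcqc (hc.symm.trans ((glue_eq_iff d X b c q).mp h).2)
        have e1 : ¬((a = rA d X p ∧ b = rA d X p) ∧ c = rC d X p) := by
          rintro ⟨⟨-, rfl⟩, rfl⟩
          exact h2 (glue_rr d X p)
        simp only [h0 _ h2 h3, map_zero, mul_zero, if_neg e1, if_neg e2, add_zero]
    · by_cases h1' : glue d X a c = q
      · obtain ⟨ha, hc⟩ := (glue_eq_iff d X a c q).mp h1'
        have e1 : ¬((a = rA d X p ∧ b = rA d X p) ∧ c = rC d X p) :=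
          fun h => hpcqc (h.2.symm.trans hc)
        by_cases h2 : glue d X b c = q
        · obtain ⟨hb, -⟩ := (glue_eq_iff d X b c q).mp h2
          simp only [if_neg e1, if_pos (show (a = rA d X q ∧ b = rA d X q) ∧ c = rC d X q
            from ⟨⟨ha, hb⟩, hc⟩), zero_add, h1', h2, hq, hαα]
        · have h3 : glue d X b c ≠ p := fun h =>
            hpcqc (((glue_eq_iff d X b c p).mp h).2.symm.trans hc)
          have e2 : ¬((a = rA d X q ∧ b = rA d X q) ∧ c = rC d X q) := by
            rintro ⟨⟨-, rfl⟩, rfl⟩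
            exact h2 (glue_rr d X q)
          simp only [h0 _ h3 h2, map_zero, mul_zero, if_neg e1, if_neg e2, add_zero]
      · have e1 : ¬((a = rA d X p ∧ b = rA d X p) ∧ c = rC d X p) := by
          rintro ⟨⟨rfl, -⟩, rfl⟩
          exact h1 (glue_rr d X p)
        have e2 : ¬((a = rA d X q ∧ b = rA d X q) ∧ c = rC d X q) := by
          rintro ⟨⟨rfl, -⟩, rfl⟩
          exact h1' (glue_rr d X q)
        simp only [h0 _ h1 h1', zero_mul, if_neg e1, if_neg e2, add_zero]
  have hρ : ∀ a b, reduced d ψ X a b =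
      (if a = rA d X p ∧ b = rA d X p then ((1/2 : ℝ) : ℂ) else 0) +
      (if a = rA d X q ∧ b = rA d X q then ((1/2 : ℝ) : ℂ) else 0) := by
    intro a b
    unfold reduced
    rw [Finset.sum_congr rfl fun c _ => key a b c, Finset.sum_add_distrib,
      sum_ite_pt, sum_ite_pt]
  have htr : (reduced d ψ X * reduced d ψ X).trace =
      ∑ a, ∑ b, reduced d ψ X a b * reduced d ψ X b a := by
    simp [Matrix.trace, Matrix.mul_apply, Matrix.diag]
  have hpt : ∀ a b, reduced d ψ X a b * reduced d ψ X b a =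
      (if a = rA d X p ∧ b = rA d X p then ((1/2 : ℝ) : ℂ) * ((1/2 : ℝ) : ℂ) else 0) +
      (if a = rA d X q ∧ b = rA d X q then ((1/2 : ℝ) : ℂ) * ((1/2 : ℝ) : ℂ) else 0) := by
    intro a b
    rw [hρ a b, hρ b a]
    by_cases h1 : a = rA d X p ∧ b = rA d X p
    · have h2 : ¬(a = rA d X q ∧ b = rA d X q) := fun h => hpaqa (h1.1.symm.trans h.1)
      simp only [if_pos h1, if_pos (show b = rA d X p ∧ a = rA d X p from ⟨h1.2, h1.1⟩),
        if_neg h2, if_neg (show ¬(b = rA d X q ∧ a = rA d X q) from fun h => h2 ⟨h.2, h.1⟩)]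
      ring
    · by_cases h3 : a = rA d X q ∧ b = rA d X q
      · have h4 : ¬(b = rA d X p ∧ a = rA d X p) := fun h => hpaqa (h.2.symm.trans h3.1)
        simp only [if_neg h1, if_neg h4, if_pos h3,
          if_pos (show b = rA d X q ∧ a = rA d X q from ⟨h3.2, h3.1⟩)]
        ring
      · simp only [if_neg h1, if_neg h3]
        ring
  rw [htr, Finset.sum_congr rfl fun a _ => Finset.sum_congr rfl fun b _ => hpt a b]
  rw [Finset.sum_congr rfl fun a _ => (Finset.sum_add_distrib (s := Finset.univ)),
    Finset.sum_add_distrib, sum_sum_ite, sum_sum_ite]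
  push_cast
  norm_num

/-- two-point supported state, the two points agreeing on `X`: reduced state on `X` pure. -/
lemma trace_two_point_agree (ψ : (∀ i, Fin (d i)) → ℂ) (p q : ∀ i, Fin (d i)) (α : ℂ)
    (hp : ψ p = α) (hq : ψ q = α) (hα : Complex.normSq α = 1/2)
    (h0 : ∀ z, z ≠ p → z ≠ q → ψ z = 0) (hpq : p ≠ q)
    (hagree : ∀ i (h : i ∈ X), p i = q i) :
    ((reduced d ψ X * reduced d ψ X).trace) = 1 := by
  have hqa : rA d X p = rA d X q := funext fun i => hagree i.1 i.2
  have hpcqc : rC d X p ≠ rC d X q := by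
    intro h
    apply hpq
    calc p = glue d X (rA d X p) (rC d X p) := (glue_rr d X p).symm
      _ = glue d X (rA d X q) (rC d X q) := by rw [h, hqa]
      _ = q := glue_rr d X q
  have hgq : glue d X (rA d X p) (rC d X q) = q := by
    rw [hqa]
    exact glue_rr d X q
  have hαα : α * (starRingEnd ℂ) α = ((1/2 : ℝ) : ℂ) := by
    rw [Complex.mul_conj, hα]
  have key : ∀ a b c, ψ (glue d X a c) * (starRingEnd ℂ) (ψ (glue d X b c)) =
      (if (a = rA d X p ∧ b = rA d X p) ∧ c = rC d X p then ((1/2 : ℝ) : ℂ) else 0) +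
      (if (a = rA d X p ∧ b = rA d X p) ∧ c = rC d X q then ((1/2 : ℝ) : ℂ) else 0) := by
    intro a b c
    by_cases h1 : glue d X a c = p
    · obtain ⟨ha, hc⟩ := (glue_eq_iff d X a c p).mp h1
      have e2 : ¬((a = rA d X p ∧ b = rA d X p) ∧ c = rC d X q) :=
        fun h => hpcqc (hc.symm.trans h.2)
      by_cases h2 : glue d X b c = p
      · obtain ⟨hb, -⟩ := (glue_eq_iff d X b c p).mp h2
        simp only [if_neg e2, if_pos (show (a = rA d X p ∧ b = rA d X p) ∧ c = rC d X p
          from ⟨⟨ha, hb⟩, hc⟩), add_zero, h1, h2, hp, hαα]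
      · have h3 : glue d X b c ≠ q := fun h =>
          hpcqc (hc.symm.trans ((glue_eq_iff d X b c q).mp h).2)
        have e1 : ¬((a = rA d X p ∧ b = rA d X p) ∧ c = rC d X p) := by
          rintro ⟨⟨-, rfl⟩, rfl⟩
          exact h2 (glue_rr d X p)
        simp only [h0 _ h2 h3, map_zero, mul_zero, if_neg e1, if_neg e2, add_zero]
    · by_cases h1' : glue d X a c = q
      · obtain ⟨ha, hc⟩ := (glue_eq_iff d X a c q).mp h1'
        have ha' : a = rA d X p := ha.trans hqa.symm
        have e1 : ¬((a = rA d X p ∧ b = rA d X p) ∧ c = rC d X p) :=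
          fun h => hpcqc (h.2.symm.trans hc)
        by_cases h2 : glue d X b c = q
        · obtain ⟨hb, -⟩ := (glue_eq_iff d X b c q).mp h2
          have hb' : b = rA d X p := hb.trans hqa.symm
          simp only [if_neg e1, if_pos (show (a = rA d X p ∧ b = rA d X p) ∧ c = rC d X q
            from ⟨⟨ha', hb'⟩, hc⟩), zero_add, h1', h2, hq, hαα]
        · have h3 : glue d X b c ≠ p := fun h =>
            hpcqc (((glue_eq_iff d X b c p).mp h).2.symm.trans hc)
          have e2 : ¬((a = rA d X p ∧ b = rA d X p) ∧ c = rC d X q) := by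
            rintro ⟨⟨-, rfl⟩, rfl⟩
            exact h2 hgq
          simp only [h0 _ h3 h2, map_zero, mul_zero, if_neg e1, if_neg e2, add_zero]
      · have e1 : ¬((a = rA d X p ∧ b = rA d X p) ∧ c = rC d X p) := by
          rintro ⟨⟨rfl, -⟩, rfl⟩
          exact h1 (glue_rr d X p)
        have e2 : ¬((a = rA d X p ∧ b = rA d X p) ∧ c = rC d X q) := by
          rintro ⟨⟨rfl, -⟩, rfl⟩
          exact h1' hgq
        simp only [h0 _ h1 h1', zero_mul, if_neg e1, if_neg e2, add_zero]
  have hρ : ∀ a b, reduced d ψ X a b =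
      if a = rA d X p ∧ b = rA d X p then (1 : ℂ) else 0 := by
    intro a b
    unfold reduced
    rw [Finset.sum_congr rfl fun c _ => key a b c, Finset.sum_add_distrib,
      sum_ite_pt, sum_ite_pt]
    by_cases hab : a = rA d X p ∧ b = rA d X p
    · simp only [if_pos hab]
      push_cast
      norm_num
    · simp only [if_neg hab, add_zero]
  have htr : (reduced d ψ X * reduced d ψ X).trace =
      ∑ a, ∑ b, reduced d ψ X a b * reduced d ψ X b a := by
    simp [Matrix.trace, Matrix.mul_apply, Matrix.diag]
  have hpt : ∀ a b, reduced d ψ X a b * reduced d ψ X b a =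
      if a = rA d X p ∧ b = rA d X p then (1 : ℂ) else 0 := by
    intro a b
    rw [hρ a b, hρ b a]
    by_cases h1 : a = rA d X p ∧ b = rA d X p
    · simp only [if_pos h1, if_pos (show b = rA d X p ∧ a = rA d X p from ⟨h1.2, h1.1⟩),
        one_mul]
    · simp only [if_neg h1, zero_mul]
  rw [htr, Finset.sum_congr rfl fun a _ => Finset.sum_congr rfl fun b _ => hpt a b]
  exact sum_sum_ite (1 : ℂ) (rA d X p)

/-- `h_C` of a pure reduced state. -/
lemma hC_eq_zero_of_trace_one {A : Type} [Fintype A] (ρ : Matrix A A ℂ)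
    (h : (ρ * ρ).trace = 1) : hC ρ = 0 := by
  unfold hC
  rw [h]
  norm_num

lemma hC_eq_one_of_trace_half {A : Type} [Fintype A] (ρ : Matrix A A ℂ)
    (h : (ρ * ρ).trace = ((1/2 : ℝ) : ℂ)) : hC ρ = 1 := by
  unfold hC
  rw [h]
  norm_num

/-! ### Concrete states -/

/-- the two-qubit product state `|00⟩`. -/
def psiAB : (∀ _ : Fin 2, Fin 2) → ℂ := fun x => if x = (fun _ => 0) then 1 else 0

/-- the one-qubit state `|0⟩`. -/
def psiC : (∀ _ : Fin 1, Fin 2) → ℂ := fun x => if x = (fun _ => 0) then 1 else 0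

def c0 : ∀ _ : Fin 3, Fin 2 := fun _ => 0
def c1 : ∀ _ : Fin 3, Fin 2 := fun _ => 1

/-- the GHZ amplitude. -/
def gα : ℂ := ((Real.sqrt 2)⁻¹ : ℝ)

/-- the three-qubit GHZ state. -/
def psiDEF : (∀ _ : Fin 3, Fin 2) → ℂ := fun x => if x = c0 then gα else if x = c1 then gα else 0

lemma normSq_gα : Complex.normSq gα = 1/2 := by
  rw [gα, Complex.normSq_ofReal, ← mul_inv, Real.mul_self_sqrt (by norm_num)]
  norm_num

lemma gα_ne_zero : gα ≠ 0 := by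
  rw [gα]
  rw [Complex.ofReal_ne_zero]
  positivity

lemma psiDEF_c0 : psiDEF c0 = gα := by
  rw [psiDEF, if_pos rfl]

lemma psiDEF_c1 : psiDEF c1 = gα := by
  rw [psiDEF, if_neg (by decide), if_pos rfl]

lemma psiDEF_supp : ∀ z, z ≠ c0 → z ≠ c1 → psiDEF z = 0 := by
  intro z h0 h1
  rw [psiDEF, if_neg h0, if_neg h1]

lemma isState_psiAB : IsState (fun _ => 2) psiAB := by
  unfold IsState psiAB
  have h : ∀ x : ∀ _ : Fin 2, Fin 2, Complex.normSq (if x = (fun _ => 0) then (1:ℂ) else 0)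
      = if x = (fun _ => 0) then (1:ℝ) else 0 := by
    intro x
    split_ifs <;> simp
  rw [Finset.sum_congr rfl fun x _ => h x, Finset.sum_ite_eq']
  simp

lemma isState_psiC : IsState (fun _ => 2) psiC := by
  unfold IsState psiC
  have h : ∀ x : ∀ _ : Fin 1, Fin 2, Complex.normSq (if x = (fun _ => 0) then (1:ℂ) else 0)
      = if x = (fun _ => 0) then (1:ℝ) else 0 := by
    intro x
    split_ifs <;> simp
  rw [Finset.sum_congr rfl fun x _ => h x, Finset.sum_ite_eq']
  simp

lemma isState_psiDEF : IsState (fun _ => 2) psiDEF := by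
  unfold IsState
  have h : ∀ x : ∀ _ : Fin 3, Fin 2, Complex.normSq (psiDEF x)
      = (if x = c0 then (1/2:ℝ) else 0) + (if x = c1 then (1/2:ℝ) else 0) := by
    intro x
    by_cases h0 : x = c0
    · have h1 : x ≠ c1 := by rw [h0]; decide
      rw [if_pos h0, if_neg h1, h0, psiDEF_c0, normSq_gα, add_zero]
    · by_cases h1 : x = c1
      · rw [if_neg h0, if_pos h1, h1, psiDEF_c1, normSq_gα, zero_add]
      · rw [if_neg h0, if_neg h1, psiDEF_supp x h0 h1]
        simp
  rw [Finset.sum_congr rfl fun x _ => h x, Finset.sum_add_distrib,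
    Finset.sum_ite_eq', Finset.sum_ite_eq']
  norm_num

lemma genEnt_psiDEF : GenuinelyEntangled (fun _ : Fin 3 => 2) psiDEF := by
  intro X hne huniv
  rintro ⟨φ, χ, hfac⟩
  obtain ⟨i0, hi0⟩ := Finset.nonempty_iff_ne_empty.mpr hne
  have hsub : ¬ ∀ j, j ∈ X := fun h => huniv (Finset.eq_univ_iff_forall.mpr h)
  push_neg at hsub
  obtain ⟨j0, hj0⟩ := hsub
  set m : ∀ _ : Fin 3, Fin 2 := fun i => if i ∈ X then 0 else 1 with hm
  have hm0 : m ≠ c0 := by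
    intro h
    have := congrFun h j0
    simp only [hm, if_neg hj0, c0] at this
    exact absurd this (by decide)
  have hm1 : m ≠ c1 := by
    intro h
    have := congrFun h i0
    simp only [hm, if_pos hi0, c1] at this
    exact absurd this (by decide)
  have hrX : (fun i : {i // i ∈ X} => m i.1) = (fun i : {i // i ∈ X} => c0 i.1) := by
    funext i
    simp only [hm, if_pos i.2, c0]
  have hrXc : (fun i : {i // i ∉ X} => m i.1) = (fun i : {i // i ∉ X} => c1 i.1) := by
    funext i
    simp only [hm, if_neg i.2, c1]
  have h0 := hfac c0
  rw [psiDEF_c0] at h0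
  have h1 := hfac c1
  rw [psiDEF_c1] at h1
  have hφ : φ (fun i => c0 i.1) ≠ 0 := fun h => gα_ne_zero (by rw [h0, h, zero_mul])
  have hχ : χ (fun i => c1 i.1) ≠ 0 := fun h => gα_ne_zero (by rw [h1, h, mul_zero])
  have hmm := hfac m
  rw [psiDEF_supp m hm0 hm1, hrX, hrXc] at hmm
  exact mul_ne_zero hφ hχ hmm.symm

/-! ### The composite systems -/

/-- dimensions for the `AB|C` system. -/
abbrev d3 : Fin 2 ⊕ Fin 1 → ℕ := Sum.elim (fun _ => 2) (fun _ => 2)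
/-- dimensions for the full six-party system. -/
abbrev d6 : (Fin 2 ⊕ Fin 1) ⊕ Fin 3 → ℕ := Sum.elim d3 (fun _ => 2)

/-- the state `|00⟩⊗|0⟩`. -/
def psi3 : (∀ i, Fin (d3 i)) → ℂ := tens (fun _ => 2) (fun _ => 2) psiAB psiC
/-- the full state `|00⟩⊗|0⟩⊗|GHZ⟩`. -/
def psi6 : (∀ i, Fin (d6 i)) → ℂ := tens d3 (fun _ => 2) psi3 psiDEF

def w0 : ∀ i, Fin (d3 i) := fun i => match i with
  | .inl _ => (0 : Fin 2)
  | .inr _ => (0 : Fin 2)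

def z0 : ∀ i, Fin (d6 i) := fun i => match i with
  | .inl j => w0 j
  | .inr _ => (0 : Fin 2)

def z1 : ∀ i, Fin (d6 i) := fun i => match i with
  | .inl j => w0 j
  | .inr _ => (1 : Fin 2)

lemma psi3_w0 : psi3 w0 = 1 := by
  show psiAB (fun _ => 0) * psiC (fun _ => 0) = 1
  rw [psiAB, psiC, if_pos rfl, if_pos rfl, one_mul]

lemma psi3_supp : ∀ z, z ≠ w0 → psi3 z = 0 := by
  intro z hz
  by_cases hA : (fun i => z (Sum.inl i)) = (fun _ : Fin 2 => (0 : Fin 2))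
  · by_cases hB : (fun i => z (Sum.inr i)) = (fun _ : Fin 1 => (0 : Fin 2))
    · exfalso
      apply hz
      funext i
      cases i with
      | inl j => exact congrFun hA j
      | inr j => exact congrFun hB j
    · show psiAB _ * psiC _ = 0
      rw [show psiC (fun i => z (Sum.inr i)) = 0 from if_neg hB, mul_zero]
  · show psiAB _ * psiC _ = 0
    rw [show psiAB (fun i => z (Sum.inl i)) = 0 from if_neg hA, zero_mul]

lemma psi6_z0 : psi6 z0 = gα := by
  show psi3 (fun i => z0 (Sum.inl i)) * psiDEF (fun i => z0 (Sum.inr i)) = gα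
  rw [show (fun i => z0 (Sum.inl i)) = w0 from rfl,
    show (fun i => z0 (Sum.inr i)) = c0 from rfl, psi3_w0, psiDEF_c0, one_mul]

lemma psi6_z1 : psi6 z1 = gα := by
  show psi3 (fun i => z1 (Sum.inl i)) * psiDEF (fun i => z1 (Sum.inr i)) = gα
  rw [show (fun i => z1 (Sum.inl i)) = w0 from rfl,
    show (fun i => z1 (Sum.inr i)) = c1 from rfl, psi3_w0, psiDEF_c1, one_mul]

lemma psi6_supp : ∀ z, z ≠ z0 → z ≠ z1 → psi6 z = 0 := by
  intro z h0 h1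
  show psi3 (fun i => z (Sum.inl i)) * psiDEF (fun i => z (Sum.inr i)) = 0
  by_cases hL : (fun i => z (Sum.inl i)) = w0
  · by_cases hR0 : (fun i => z (Sum.inr i)) = c0
    · exfalso
      apply h0
      funext i
      cases i with
      | inl j => exact congrFun hL j
      | inr j => exact congrFun hR0 j
    · by_cases hR1 : (fun i => z (Sum.inr i)) = c1
      · exfalso
        apply h1
        funext i
        cases i with
        | inl j => exact congrFun hL j
        | inr j => exact congrFun hR1 j
      · rw [psiDEF_supp _ hR0 hR1, mul_zero]
  · rw [psi3_supp _ hL, zero_mul]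

instance finenessDecidable {σ : Type} [Fintype σ] [DecidableEq σ] (P : σ → σ) (k : ℕ) :
    Decidable (Fineness P k) := by
  unfold Fineness
  infer_instance

/-! ### Values of the averaged measure -/

lemma hC_psi3 (X : Finset (Fin 2 ⊕ Fin 1)) : hC (reduced d3 psi3 X) = 0 :=
  hC_eq_zero_of_trace_one _ (trace_one_point d3 X psi3 w0
    (by rw [psi3_w0]; simp) psi3_supp)

lemma Cavg_psi3 : Cavg d3 hCF 3 psi3 = 0 := by
  have hval : ∀ P : Fin 2 ⊕ Fin 1 → Fin 2 ⊕ Fin 1,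
      ((∑ b ∈ Finset.univ.filter (fun b => (fiber P b).Nonempty),
        hCF _ (reduced d3 psi3 (fiber P b))) /
        ((Finset.univ.filter (fun b => (fiber P b).Nonempty)).card : ℝ)) = 0 := by
    intro P
    simp only [hCF]
    rw [Finset.sum_congr rfl fun b _ => hC_psi3 (fiber P b), Finset.sum_const_zero, zero_div]
  have hset : { x | ∃ P : Fin 2 ⊕ Fin 1 → Fin 2 ⊕ Fin 1, Fineness P (3 - 1) ∧
      x = (∑ b ∈ Finset.univ.filter (fun b => (fiber P b).Nonempty),
            hCF _ (reduced d3 psi3 (fiber P b))) /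
          ((Finset.univ.filter (fun b => (fiber P b).Nonempty)).card : ℝ) } = {(0:ℝ)} := by
    apply Set.eq_singleton_iff_unique_mem.mpr
    constructor
    · exact ⟨id, by decide, (hval id).symm⟩
    · rintro x ⟨P, -, rfl⟩
      exact hval P
  unfold Cavg
  rw [hset]
  exact csInf_singleton 0

lemma hC_psiDEF (X : Finset (Fin 3)) (hne : X.Nonempty) (hnu : X ≠ Finset.univ) :
    hC (reduced (fun _ => 2) psiDEF X) = 1 := by
  obtain ⟨i0, hi0⟩ := hne
  have hsub : ¬ ∀ j, j ∈ X := fun h => hnu (Finset.eq_univ_iff_forall.mpr h)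
  push_neg at hsub
  obtain ⟨j0, hj0⟩ := hsub
  exact hC_eq_one_of_trace_half _ (trace_two_point_split (fun _ => 2) X psiDEF c0 c1 gα
    psiDEF_c0 psiDEF_c1 normSq_gα psiDEF_supp
    ⟨i0, hi0, by exact (by decide : (0:Fin 2) ≠ 1)⟩
    ⟨j0, hj0, by exact (by decide : (0:Fin 2) ≠ 1)⟩)

lemma Cavg_psiDEF : Cavg (fun _ : Fin 3 => 2) hCF 3 psiDEF = 1 := by
  have hval : ∀ P : Fin 3 → Fin 3, Fineness P 2 →
      ((∑ b ∈ Finset.univ.filter (fun b => (fiber P b).Nonempty),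
        hCF _ (reduced (fun _ => 2) psiDEF (fiber P b))) /
        ((Finset.univ.filter (fun b => (fiber P b).Nonempty)).card : ℝ)) = 1 := by
    intro P hP
    simp only [hCF]
    have hone : ∀ b ∈ Finset.univ.filter (fun b => (fiber P b).Nonempty),
        hC (reduced (fun _ => 2) psiDEF (fiber P b)) = 1 := by
      intro b hb
      have hbne : (fiber P b).Nonempty := (Finset.mem_filter.mp hb).2
      have hbnu : fiber P b ≠ Finset.univ := by
        intro h
        have := hP b
        rw [h] at this
        exact absurd this (by decide)
      exact hC_psiDEF _ hbne hbnu
    have hFne : P 0 ∈ Finset.univ.filter (fun b => (fiber P b).Nonempty) :=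
      Finset.mem_filter.mpr ⟨Finset.mem_univ _, ⟨0, Finset.mem_filter.mpr
        ⟨Finset.mem_univ _, rfl⟩⟩⟩
    rw [Finset.sum_congr rfl hone, Finset.sum_const, nsmul_eq_mul, mul_one]
    exact div_self (Nat.cast_ne_zero.mpr (Finset.card_ne_zero_of_mem hFne))
  have hset : { x | ∃ P : Fin 3 → Fin 3, Fineness P (3 - 1) ∧
      x = (∑ b ∈ Finset.univ.filter (fun b => (fiber P b).Nonempty),
            hCF _ (reduced (fun _ => 2) psiDEF (fiber P b))) /
          ((Finset.univ.filter (fun b => (fiber P b).Nonempty)).card : ℝ) } = {(1:ℝ)} := by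
    apply Set.eq_singleton_iff_unique_mem.mpr
    constructor
    · exact ⟨id, by decide, (hval id (by decide)).symm⟩
    · rintro x ⟨P, hP, rfl⟩
      exact hval P hP
  unfold Cavg
  rw [hset]
  exact csInf_singleton 1

/-! ### The six-party system: upper bound `2/5` -/

/-- the partition `{A},{B},{C},{D,E},{F}` of the six parties. -/
def P6 : ((Fin 2 ⊕ Fin 1) ⊕ Fin 3) → ((Fin 2 ⊕ Fin 1) ⊕ Fin 3) :=
  fun i => if i = Sum.inr 1 then Sum.inr 0 else i

lemma hC6_A : hC (reduced d6 psi6 (fiber P6 (Sum.inl (Sum.inl 0)))) = 0 :=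
  hC_eq_zero_of_trace_one _ (trace_two_point_agree d6 _ psi6 z0 z1 gα
    psi6_z0 psi6_z1 normSq_gα psi6_supp (by decide) (by decide))

lemma hC6_B : hC (reduced d6 psi6 (fiber P6 (Sum.inl (Sum.inl 1)))) = 0 :=
  hC_eq_zero_of_trace_one _ (trace_two_point_agree d6 _ psi6 z0 z1 gα
    psi6_z0 psi6_z1 normSq_gα psi6_supp (by decide) (by decide))

lemma hC6_C : hC (reduced d6 psi6 (fiber P6 (Sum.inl (Sum.inr 0)))) = 0 :=
  hC_eq_zero_of_trace_one _ (trace_two_point_agree d6 _ psi6 z0 z1 gα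
    psi6_z0 psi6_z1 normSq_gα psi6_supp (by decide) (by decide))

lemma hC6_DE : hC (reduced d6 psi6 (fiber P6 (Sum.inr 0))) = 1 :=
  hC_eq_one_of_trace_half _ (trace_two_point_split d6 _ psi6 z0 z1 gα
    psi6_z0 psi6_z1 normSq_gα psi6_supp
    ⟨Sum.inr 0, by decide, by decide⟩ ⟨Sum.inr 2, by decide, by decide⟩)

lemma hC6_F : hC (reduced d6 psi6 (fiber P6 (Sum.inr 2))) = 1 :=
  hC_eq_one_of_trace_half _ (trace_two_point_split d6 _ psi6 z0 z1 gα
    psi6_z0 psi6_z1 normSq_gα psi6_supp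
    ⟨Sum.inr 2, by decide, by decide⟩ ⟨Sum.inr 0, by decide, by decide⟩)

lemma Cavg_psi6_le : Cavg d6 hCF 3 psi6 ≤ 2/5 := by
  unfold Cavg
  apply csInf_le
  · refine ⟨0, ?_⟩
    rintro x ⟨P, -, rfl⟩
    apply div_nonneg
    · apply Finset.sum_nonneg
      intro b _
      exact Real.sqrt_nonneg _
    · exact Nat.cast_nonneg _
  · refine ⟨P6, by decide, ?_⟩
    simp only [hCF]
    have hF : Finset.univ.filter (fun b => (fiber P6 b).Nonempty) =
        ({Sum.inl (Sum.inl 0), Sum.inl (Sum.inl 1), Sum.inl (Sum.inr 0), Sum.inr 0,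
          Sum.inr 2} : Finset ((Fin 2 ⊕ Fin 1) ⊕ Fin 3)) := by decide
    rw [hF]
    rw [Finset.sum_insert (by decide), Finset.sum_insert (by decide),
      Finset.sum_insert (by decide), Finset.sum_insert (by decide), Finset.sum_singleton]
    rw [hC6_A, hC6_B, hC6_C, hC6_DE, hC6_F,
      show ({Sum.inl (Sum.inl 0), Sum.inl (Sum.inl 1), Sum.inl (Sum.inr 0), Sum.inr 0,
        Sum.inr 2} : Finset ((Fin 2 ⊕ Fin 1) ⊕ Fin 3)).card = 5 from by decide]
    norm_num

end

end KPEAux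
/-- the averaged concurrence-based measure `C_{(k)}` fails additivity:
there are pure states `|ψ⟩^{AB}`, `|ψ⟩^{C}`, `|ψ⟩^{DEF}` (with `|ψ⟩^{DEF}` genuinely
entangled) such that `C_{(3)}(|ψ⟩^{AB}⊗|ψ⟩^{C}) + C_{(3)}(|ψ⟩^{DEF}) ≠
C_{(3)}(|ψ⟩^{AB}⊗|ψ⟩^{C}⊗|ψ⟩^{DEF})`. -/
theorem Cavg_not_additive :
    ∃ (ψAB : (∀ _ : Fin 2, Fin 2) → ℂ) (ψC : (∀ _ : Fin 1, Fin 2) → ℂ)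
      (ψDEF : (∀ _ : Fin 3, Fin 2) → ℂ),
      KPE.IsState (fun _ => 2) ψAB ∧ KPE.IsState (fun _ => 2) ψC ∧
      KPE.IsState (fun _ => 2) ψDEF ∧
      KPE.GenuinelyEntangled (fun _ : Fin 3 => 2) ψDEF ∧
      KPE.Cavg (Sum.elim (fun _ : Fin 2 => 2) (fun _ : Fin 1 => 2)) hCF 3
          (KPE.tens (fun _ : Fin 2 => 2) (fun _ : Fin 1 => 2) ψAB ψC)
        + KPE.Cavg (fun _ : Fin 3 => 2) hCF 3 ψDEF
        ≠ KPE.Cavg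
            (Sum.elim (Sum.elim (fun _ : Fin 2 => 2) (fun _ : Fin 1 => 2)) (fun _ : Fin 3 => 2))
            hCF 3
            (KPE.tens (Sum.elim (fun _ : Fin 2 => 2) (fun _ : Fin 1 => 2)) (fun _ : Fin 3 => 2)
              (KPE.tens (fun _ : Fin 2 => 2) (fun _ : Fin 1 => 2) ψAB ψC) ψDEF) := by
  refine ⟨KPEAux.psiAB, KPEAux.psiC, KPEAux.psiDEF, KPEAux.isState_psiAB,
    KPEAux.isState_psiC, KPEAux.isState_psiDEF, KPEAux.genEnt_psiDEF, ?_⟩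
  show KPE.Cavg KPEAux.d3 hCF 3 KPEAux.psi3
      + KPE.Cavg (fun _ : Fin 3 => 2) hCF 3 KPEAux.psiDEF ≠ KPE.Cavg KPEAux.d6 hCF 3 KPEAux.psi6
  rw [KPEAux.Cavg_psi3, KPEAux.Cavg_psiDEF]
  intro h
  have hle := KPEAux.Cavg_psi6_le
  rw [← h] at hle
  linarith
end
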